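/- Let E be a real normed vector space, f₀, f₁ : E → ℝ differentiable functions, and Z : E → E a map. Define G : E × ℝ × ℝ → ℝ by G(p,s,t) = s² + t·f₁(p) + (1−t)·f₀(p). Fix (p,s,t) such that D := 2s² + t·Df₁(p)(Z p) + (1−t)·Df₀(p)(Z p) ≠ 0, and set c := (f₁(p) − f₀(p))/D. Then the Fréchet derivative of G at (p,s,t) applied to the vector (c·Z p, c·s, −1) equals 0. (That is, the vector field −∂_t + X_t, where X_t = ((f₁−f₀)/dG(Z+s∂_s))·(Z + s∂_s), is everywhere tangent to the level sets of G.) -/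

import Mathlib

/-- For `G(p,s,t) = s² + t·f₁(p) + (1-t)·f₀(p)`, at a point where
`D = 2s² + t·Df₁(p)(Z p) + (1-t)·Df₀(p)(Z p) ≠ 0`, setting `c = (f₁ p − f₀ p)/D`, the derivative
of `G` applied to the vector `(c·Z p, c·s, −1)` vanishes; i.e. the vector field `−∂_t + X_t` is
tangent to the level sets of `G`. -/
theorem stmt_4 {E : Type*} [NormedAddCommGroup E] [NormedSpace ℝ E]
    (f₀ f₁ : E → ℝ) (Z : E → E)
    (hf₀ : Differentiable ℝ f₀) (hf₁ : Differentiable ℝ f₁)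
    (p : E) (s t : ℝ) (D c : ℝ)
    (hD : D = 2 * s ^ 2 + t * fderiv ℝ f₁ p (Z p) + (1 - t) * fderiv ℝ f₀ p (Z p))
    (hD0 : D ≠ 0)
    (hc : c = (f₁ p - f₀ p) / D) :
    fderiv ℝ (fun x : E × ℝ × ℝ => x.2.1 ^ 2 + x.2.2 * f₁ x.1 + (1 - x.2.2) * f₀ x.1)
      (p, s, t) (c • Z p, c * s, -1) = 0 := by
  have hfst : HasFDerivAt (Prod.fst : E × ℝ × ℝ → E)
      (ContinuousLinearMap.fst ℝ E (ℝ × ℝ)) (p, s, t) := hasFDerivAt_fst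
  have hs : HasFDerivAt (fun x : E × ℝ × ℝ => x.2.1)
      ((ContinuousLinearMap.fst ℝ ℝ ℝ).comp (ContinuousLinearMap.snd ℝ E (ℝ × ℝ))) (p, s, t) :=
    hasFDerivAt_fst.comp _ hasFDerivAt_snd
  have ht : HasFDerivAt (fun x : E × ℝ × ℝ => x.2.2)
      ((ContinuousLinearMap.snd ℝ ℝ ℝ).comp (ContinuousLinearMap.snd ℝ E (ℝ × ℝ))) (p, s, t) :=
    hasFDerivAt_snd.comp _ hasFDerivAt_snd
  have h1 : HasFDerivAt (fun x : E × ℝ × ℝ => f₁ x.1)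
      ((fderiv ℝ f₁ p).comp (ContinuousLinearMap.fst ℝ E (ℝ × ℝ))) (p, s, t) :=
    (hf₁ p).hasFDerivAt.comp _ hfst
  have h0 : HasFDerivAt (fun x : E × ℝ × ℝ => f₀ x.1)
      ((fderiv ℝ f₀ p).comp (ContinuousLinearMap.fst ℝ E (ℝ × ℝ))) (p, s, t) :=
    (hf₀ p).hasFDerivAt.comp _ hfst
  simp only [pow_two]
  have hG := ((hs.mul hs).add (ht.mul h1)).add
    (((hasFDerivAt_const (1 : ℝ) (p, s, t)).sub ht).mul h0)
  have hG' : HasFDerivAt (fun x : E × ℝ × ℝ => x.2.1 * x.2.1 + x.2.2 * f₁ x.1 + (1 - x.2.2) * f₀ x.1) _ (p, s, t) := hG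
  rw [hG'.fderiv]
  simp
  subst hc hD
  field_simp [show s ^ 2 * 2 + t * (fderiv ℝ f₁ p) (Z p) + (1 - t) * (fderiv ℝ f₀ p) (Z p) ≠ 0 by rw [mul_comm]; exact hD0]
  ring
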